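/- Let $V'$ be a real normed space and let $(f_t)_{t\ge 0}$ be a family of convex Fréchet differentiable functions $f_t:V'\to\mathbb{R}$ converging pointwise as $t\to\infty$ to a function $f_\infty:V'\to\mathbb{R}$. Suppose the derivatives satisfy $\sup_{t\ge 0}[f_t']_{Lip}\le L<\infty$ (uniform Lipschitz constant of $x\mapsto f_t'(x)$) and $\sup_{t\ge 0}\|f_t'(0)\|\le M<\infty$. Then $f_\infty$ is convex and Fréchet differentiable, its derivative $f_\infty'$ is Lipschitz with constant $L$, and for every $x,y\in V'$ one has $\langle f_t'(x),y\rangle\to\langle f_\infty'(x),y\rangle$ as $t\to\infty$. -/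
import Mathlib

open Filter Topology

theorem convex_grad_ineq {V' : Type*} [NormedAddCommGroup V'] [NormedSpace ℝ V']
    {f : V' → ℝ} {f' : V' →L[ℝ] ℝ} (hf : ConvexOn ℝ Set.univ f) (x y : V')
    (hd : HasFDerivAt f f' x) : f' y ≤ f (x + y) - f x := by
  have hline : HasDerivAt (fun t : ℝ => f (x + t • y)) (f' y) 0 := hd.hasLineDerivAt y
  set φ : ℝ → ℝ := fun t => f (x + t • y)
  have hslope : Tendsto (slope φ 0) (𝓝[>] (0:ℝ)) (𝓝 (f' y)) :=
    (hasDerivAt_iff_tendsto_slope.1 hline).mono_left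
      (nhdsWithin_mono _ (fun h hh => ne_of_gt hh))
  refine le_of_tendsto hslope ?_
  filter_upwards [Ioc_mem_nhdsGT_of_mem (Set.left_mem_Ico.2 one_pos)] with h hh
  obtain ⟨h0, h1⟩ := hh
  have hc := hf.2 (Set.mem_univ x) (Set.mem_univ (x + y))
    (show (0:ℝ) ≤ 1 - h by linarith) h0.le (by ring)
  have hxy : (1 - h) • x + h • (x + y) = x + h • y := by
    rw [smul_add]; module
  rw [hxy] at hc
  have hkey : φ h - φ 0 ≤ h * (f (x + y) - f x) := by
    simp only [φ, zero_smul, add_zero, smul_eq_mul] at hc ⊢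
    nlinarith
  have hs : slope φ 0 h = (φ h - φ 0) / h := by
    rw [slope_def_field]; ring_nf
  rw [hs, div_le_iff₀ h0]
  linarith [hkey]

theorem stmt_9 {V' : Type*} [NormedAddCommGroup V'] [NormedSpace ℝ V']
    (f : ℝ → V' → ℝ) (f' : ℝ → V' → (V' →L[ℝ] ℝ)) (finf : V' → ℝ) (L M : ℝ)
    (hL : 0 ≤ L) (hM : 0 ≤ M)
    (hconv : ∀ t ≥ (0 : ℝ), ConvexOn ℝ Set.univ (f t))
    (hdiff : ∀ t ≥ (0 : ℝ), ∀ x : V', HasFDerivAt (f t) (f' t x) x)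
    (hptwise : ∀ x : V', Tendsto (fun t => f t x) atTop (nhds (finf x)))
    (hlip : ∀ t ≥ (0 : ℝ), ∀ x y : V', ‖f' t x - f' t y‖ ≤ L * ‖x - y‖)
    (hbound : ∀ t ≥ (0 : ℝ), ‖f' t 0‖ ≤ M) :
    ConvexOn ℝ Set.univ finf ∧
    ∃ g : V' → (V' →L[ℝ] ℝ),
      (∀ x : V', HasFDerivAt finf (g x) x) ∧
      (∀ x y : V', ‖g x - g y‖ ≤ L * ‖x - y‖) ∧
      (∀ x y : V', Tendsto (fun t => f' t x y) atTop (nhds (g x y))) := by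
  -- sandwich inequality
  have key : ∀ t ≥ (0:ℝ), ∀ x v : V',
      0 ≤ f t (x + v) - f t x - f' t x v ∧
      f t (x + v) - f t x - f' t x v ≤ L * ‖v‖ ^ 2 := by
    intro t ht x v
    have h1 := convex_grad_ineq (hconv t ht) x v (hdiff t ht x)
    have h2 := convex_grad_ineq (hconv t ht) (x + v) (-v) (hdiff t ht (x + v))
    have h2' : f t (x + v) - f t x ≤ f' t (x + v) v := by
      have hxvv : x + v + -v = x := by abel
      rw [hxvv, map_neg] at h2; linarith
    refine ⟨by linarith, ?_⟩
    have h3 : f' t (x + v) v - f' t x v ≤ L * ‖v‖ ^ 2 := by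
      have hle := (f' t (x + v) - f' t x).le_opNorm v
      have hl := hlip t ht (x + v) x
      have hxv : x + v - x = v := by abel
      rw [hxv] at hl
      have : ((f' t (x + v) - f' t x) : V' →L[ℝ] ℝ) v = f' t (x + v) v - f' t x v := rfl
      rw [this] at hle
      calc f' t (x + v) v - f' t x v ≤ ‖f' t (x + v) v - f' t x v‖ := le_abs_self _
        _ ≤ ‖f' t (x + v) - f' t x‖ * ‖v‖ := hle
        _ ≤ L * ‖v‖ * ‖v‖ := mul_le_mul_of_nonneg_right hl (norm_nonneg v)
        _ = L * ‖v‖ ^ 2 := by ring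
    linarith
  -- bound on the derivatives
  have dbound : ∀ t ≥ (0:ℝ), ∀ x : V', ‖f' t x‖ ≤ M + L * ‖x‖ := by
    intro t ht x
    have hl := hlip t ht x 0
    rw [sub_zero] at hl
    calc ‖f' t x‖ = ‖(f' t x - f' t 0) + f' t 0‖ := by rw [sub_add_cancel]
      _ ≤ ‖f' t x - f' t 0‖ + ‖f' t 0‖ := norm_add_le _ _
      _ ≤ L * ‖x‖ + M := add_le_add hl (hbound t ht)
      _ = M + L * ‖x‖ := by ring
  -- existence of limits of derivatives
  have hex : ∀ x v : V', ∃ l : ℝ, Tendsto (fun t => f' t x v) atTop (𝓝 l) := by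
    intro x v
    apply cauchySeq_tendsto_of_complete
    rw [Metric.cauchySeq_iff]
    intro ε hε
    set C := L * ‖v‖ ^ 2 with hCdef
    have hC0 : 0 ≤ C := by positivity
    set h := ε / (4 * (C + 1)) with hhdef
    have hh : 0 < h := by positivity
    have hCh : C * h ≤ ε / 4 := by
      rw [hhdef, mul_div_assoc', div_le_div_iff₀ (by positivity) (by norm_num)]
      nlinarith
    have hq : ∀ t ≥ (0:ℝ), |f' t x v - (f t (x + h • v) - f t x) / h| ≤ C * h := by
      intro t ht
      obtain ⟨k1, k2⟩ := key t ht x (h • v)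
      have e1 : f' t x (h • v) = h * f' t x v := by
        rw [map_smul]; simp
      have e2 : ‖h • v‖ ^ 2 = h ^ 2 * ‖v‖ ^ 2 := by
        rw [norm_smul, Real.norm_eq_abs, abs_of_pos hh, mul_pow]
      rw [e1] at k1 k2; rw [e2] at k2
      have hne : h ≠ 0 := ne_of_gt hh
      have eq1 : (f t (x + h • v) - f t x) / h - f' t x v
          = (f t (x + h • v) - f t x - h * f' t x v) / h := by
        field_simp
      rw [abs_sub_comm, abs_le]
      constructor
      · have h0 : 0 ≤ (f t (x + h • v) - f t x) / h - f' t x v := by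
          rw [eq1]; exact div_nonneg k1 hh.le
        nlinarith
      · rw [eq1, div_le_iff₀ hh]
        calc f t (x + h • v) - f t x - h * f' t x v ≤ L * (h ^ 2 * ‖v‖ ^ 2) := k2
          _ = C * h * h := by rw [hCdef]; ring
    have hqconv : Tendsto (fun t => (f t (x + h • v) - f t x) / h) atTop
        (𝓝 ((finf (x + h • v) - finf x) / h)) :=
      ((hptwise (x + h • v)).sub (hptwise x)).div_const h
    have hqc := hqconv.cauchySeq
    rw [Metric.cauchySeq_iff] at hqc
    obtain ⟨N, hN⟩ := hqc (ε / 4) (by positivity)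
    refine ⟨max N 0, fun s hs t ht => ?_⟩
    set q := fun t => (f t (x + h • v) - f t x) / h with hqdef
    have d1 := hq s (le_trans (le_max_right N 0) hs)
    have d2 := hq t (le_trans (le_max_right N 0) ht)
    have d3 := hN s (le_trans (le_max_left N 0) hs) t (le_trans (le_max_left N 0) ht)
    rw [Real.dist_eq] at d3 ⊢
    have t1 := abs_sub_le (f' s x v) (q s) (f' t x v)
    have t2 := abs_sub_le (q s) (q t) (f' t x v)
    have t3 : |q t - f' t x v| = |f' t x v - q t| := abs_sub_comm _ _
    have hε4 : ε / 4 < ε / 3 := by linarith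
    linarith
  choose φ hφ using hex
  -- bound on φ
  have φbound : ∀ x v : V', |φ x v| ≤ (M + L * ‖x‖) * ‖v‖ := by
    intro x v
    refine le_of_tendsto (hφ x v).abs ?_
    filter_upwards [eventually_ge_atTop (0:ℝ)] with t ht
    calc |f' t x v| = ‖f' t x v‖ := rfl
      _ ≤ ‖f' t x‖ * ‖v‖ := (f' t x).le_opNorm v
      _ ≤ (M + L * ‖x‖) * ‖v‖ := mul_le_mul_of_nonneg_right (dbound t ht x) (norm_nonneg v)
  -- construct g
  set g : V' → (V' →L[ℝ] ℝ) := fun x => LinearMap.mkContinuous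
    { toFun := φ x
      map_add' := fun u v => by
        have h1 : Tendsto (fun t => f' t x u + f' t x v) atTop (𝓝 (φ x u + φ x v)) :=
          (hφ x u).add (hφ x v)
        have h2 : Tendsto (fun t => f' t x (u + v)) atTop (𝓝 (φ x u + φ x v)) := by
          simpa [map_add] using h1
        exact tendsto_nhds_unique (hφ x (u + v)) h2
      map_smul' := fun c v => by
        have h1 : Tendsto (fun t => c * f' t x v) atTop (𝓝 (c * φ x v)) :=
          (hφ x v).const_mul c
        have h2 : Tendsto (fun t => f' t x (c • v)) atTop (𝓝 (c * φ x v)) := by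
          simpa [map_smul] using h1
        exact tendsto_nhds_unique (hφ x (c • v)) h2 }
    (M + L * ‖x‖) (fun v => by simpa [Real.norm_eq_abs] using φbound x v) with hgdef
  have hgφ : ∀ x v : V', g x v = φ x v := fun x v => rfl
  -- sandwich for the limit
  have gsand : ∀ x v : V', 0 ≤ finf (x + v) - finf x - g x v ∧
      finf (x + v) - finf x - g x v ≤ L * ‖v‖ ^ 2 := by
    intro x v
    have hT : Tendsto (fun t => f t (x + v) - f t x - f' t x v) atTop
        (𝓝 (finf (x + v) - finf x - g x v)) := by
      rw [hgφ]
      exact ((hptwise (x + v)).sub (hptwise x)).sub (hφ x v)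
    constructor
    · refine ge_of_tendsto hT ?_
      filter_upwards [eventually_ge_atTop (0:ℝ)] with t ht
      exact (key t ht x v).1
    · refine le_of_tendsto hT ?_
      filter_upwards [eventually_ge_atTop (0:ℝ)] with t ht
      exact (key t ht x v).2
  -- differentiability
  have hderiv : ∀ x : V', HasFDerivAt finf (g x) x := by
    intro x
    rw [hasFDerivAt_iff_isLittleO_nhds_zero, Asymptotics.isLittleO_iff]
    intro c hc
    have hc' : (0:ℝ) < c / (L + 1) := by positivity
    filter_upwards [Metric.ball_mem_nhds (0:V') hc'] with v hv
    rw [Metric.mem_ball, dist_zero_right] at hv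
    obtain ⟨hb1, hb2⟩ := gsand x v
    have hnorm : ‖finf (x + v) - finf x - g x v‖ = finf (x + v) - finf x - g x v := by
      rw [Real.norm_eq_abs, abs_of_nonneg hb1]
    rw [hnorm]
    have hLv : L * ‖v‖ ≤ c := by
      have h1 : L * ‖v‖ ≤ L * (c / (L + 1)) :=
        mul_le_mul_of_nonneg_left hv.le hL
      have h2 : L * (c / (L + 1)) ≤ c := by
        rw [mul_div_assoc', div_le_iff₀ (by positivity)]
        nlinarith
      linarith
    calc finf (x + v) - finf x - g x v ≤ L * ‖v‖ ^ 2 := hb2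
      _ = (L * ‖v‖) * ‖v‖ := by ring
      _ ≤ c * ‖v‖ := mul_le_mul_of_nonneg_right hLv (norm_nonneg v)
  -- Lipschitz continuity of g
  have glip : ∀ x y : V', ‖g x - g y‖ ≤ L * ‖x - y‖ := by
    intro x y
    refine ContinuousLinearMap.opNorm_le_bound _ (by positivity) (fun v => ?_)
    have hcoe : ((g x - g y) : V' →L[ℝ] ℝ) v = g x v - g y v := rfl
    rw [hcoe, hgφ, hgφ]
    have hT : Tendsto (fun t => |f' t x v - f' t y v|) atTop (𝓝 |φ x v - φ y v|) :=
      ((hφ x v).sub (hφ y v)).abs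
    calc ‖φ x v - φ y v‖ = |φ x v - φ y v| := rfl
      _ ≤ L * ‖x - y‖ * ‖v‖ := by
        refine le_of_tendsto hT ?_
        filter_upwards [eventually_ge_atTop (0:ℝ)] with t ht
        calc |f' t x v - f' t y v| = ‖((f' t x - f' t y) : V' →L[ℝ] ℝ) v‖ := rfl
          _ ≤ ‖f' t x - f' t y‖ * ‖v‖ := (f' t x - f' t y).le_opNorm v
          _ ≤ L * ‖x - y‖ * ‖v‖ :=
            mul_le_mul_of_nonneg_right (hlip t ht x y) (norm_nonneg v)
  -- convexity of finf
  have hcvx : ConvexOn ℝ Set.univ finf := by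
    refine ⟨convex_univ, fun x _ y _ a b ha hb hab => ?_⟩
    have hT1 : Tendsto (fun t => f t (a • x + b • y)) atTop (𝓝 (finf (a • x + b • y))) :=
      hptwise _
    have hT2 : Tendsto (fun t => a * f t x + b * f t y) atTop
        (𝓝 (a * finf x + b * finf y)) :=
      ((hptwise x).const_mul a).add ((hptwise y).const_mul b)
    have hle : finf (a • x + b • y) ≤ a * finf x + b * finf y := by
      refine le_of_tendsto_of_tendsto hT1 hT2 ?_
      filter_upwards [eventually_ge_atTop (0:ℝ)] with t ht
      have := (hconv t ht).2 (Set.mem_univ x) (Set.mem_univ y) ha hb hab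
      simpa [smul_eq_mul] using this
    simpa [smul_eq_mul] using hle
  exact ⟨hcvx, g, hderiv, glip, fun x v => by rw [hgφ]; exact hφ x v⟩
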